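/- arXiv:1803.01697 — 3 statements merged into one kernel-verified Lean document; each statement's English description precedes it below -/
import Mathlib

section
/- Let f : [0,∞) → ℝ be nonnegative and differentiable, satisfying f'(t) ≤ -2 f(t) + C₁ e^{-a t} f(t)^{1/2} for all t with f(t) > 0, where C₁ > 0 and a > 0. Then there exists a constant C (depending on f(0), C₁, a) such that f(t) ≤ C (1+t)² exp(-2 min(1, a) t) for all t ≥ 0. -/
open Real Set

/-- If `f ≥ 0` is differentiable and satisfies
`f' t ≤ -2 f t + C₁ exp(-a t) (f t)^{1/2}` whenever `f t > 0`, then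
`f t ≤ C (1+t)² exp(-2 min(1,a) t)` for a constant `C` depending on `f 0, C₁, a`. -/
theorem entropy_decay (f f' : ℝ → ℝ) (C₁ a : ℝ) (hC₁ : 0 < C₁) (ha : 0 < a)
    (hf0 : ∀ t, 0 ≤ t → 0 ≤ f t)
    (hderiv : ∀ t, 0 ≤ t → HasDerivAt f (f' t) t)
    (hineq : ∀ t, 0 ≤ t → 0 < f t →
      f' t ≤ -2 * f t + C₁ * Real.exp (-a * t) * (f t) ^ ((1 : ℝ) / 2)) :
    ∃ C : ℝ, ∀ t, 0 ≤ t →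
      f t ≤ C * (1 + t) ^ 2 * Real.exp (-2 * min 1 a * t) := by
  set m : ℝ := min 1 a with hm
  have hm1 : m ≤ 1 := min_le_left _ _
  have hma : m ≤ a := min_le_right _ _
  have hf00 : 0 ≤ f 0 := hf0 0 le_rfl
  set K : ℝ := f 0 + C₁ ^ 2 with hKdef
  have hK : 0 < K := by positivity
  have hsK : C₁ ≤ Real.sqrt K := by
    rw [show C₁ = Real.sqrt (C₁ ^ 2) by rw [Real.sqrt_sq hC₁.le]]
    exact Real.sqrt_le_sqrt (by linarith)
  have hCK : C₁ * Real.sqrt K < 2 * K := by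
    have h1 : C₁ * Real.sqrt K ≤ Real.sqrt K * Real.sqrt K :=
      mul_le_mul_of_nonneg_right hsK (Real.sqrt_nonneg _)
    rw [Real.mul_self_sqrt hK.le] at h1
    linarith
  refine ⟨K, fun t ht => ?_⟩
  set B : ℝ → ℝ := fun x => K * ((1 + x) ^ 2 * Real.exp (-2 * m * x)) with hB
  set B' : ℝ → ℝ := fun x =>
    K * (2 * (1 + x) * Real.exp (-2 * m * x)
      + (1 + x) ^ 2 * (-2 * m * Real.exp (-2 * m * x))) with hB'
  have hBd : ∀ x : ℝ, HasDerivAt B (B' x) x := by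
    intro x
    have h1 : HasDerivAt (fun y : ℝ => (1 + y) ^ 2) (2 * (1 + x)) x := by
      have := ((hasDerivAt_id x).const_add 1).pow 2
      convert this using 1 <;> first | rfl | simp
    have h2 : HasDerivAt (fun y : ℝ => Real.exp (-2 * m * y))
        (-2 * m * Real.exp (-2 * m * x)) x := by
      have h := ((hasDerivAt_id x).const_mul (-2 * m)).exp
      simpa [mul_comm] using h
    have := (h1.mul h2).const_mul K
    convert this using 1 <;> first | rfl | (funext y; simp [hB])
  have hmain : f t ≤ B t := by
    have := image_le_of_deriv_right_lt_deriv_boundary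
      (f := f) (f' := f') (a := 0) (b := t)
      (fun x hx => ((hderiv x hx.1).continuousAt).continuousWithinAt)
      (fun x hx => (hderiv x hx.1).hasDerivWithinAt)
      (B := B) (B' := B')
      (by rw [show B 0 = K by simp [hB]]; nlinarith [sq_nonneg C₁])
      hBd
      ?_ (right_mem_Icc.2 ht)
    · exact this
    intro x hx heq
    have hx0 : 0 ≤ x := hx.1
    have hp : (0:ℝ) < 1 + x := by linarith
    have hBpos : 0 < B x := by positivity
    have hfx : 0 < f x := heq ▸ hBpos
    have hle := hineq x hx0 hfx
    -- compute (f x) ^ (1/2)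
    have hE2 : Real.exp (-2 * m * x) = Real.exp (-m * x) ^ 2 := by
      rw [sq, ← Real.exp_add]; ring_nf
    have hsq : B x = (Real.sqrt K * (1 + x) * Real.exp (-m * x)) ^ 2 := by
      have hBx : B x = K * ((1 + x) ^ 2 * Real.exp (-2 * m * x)) := rfl
      rw [hBx, hE2, mul_pow, mul_pow, Real.sq_sqrt hK.le]
      ring
    have hroot : (B x) ^ ((1:ℝ)/2) = Real.sqrt K * (1 + x) * Real.exp (-m * x) := by
      rw [← Real.sqrt_eq_rpow, hsq, Real.sqrt_sq (by positivity)]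
    rw [heq, hroot] at hle
    refine lt_of_le_of_lt hle ?_
    -- the strict supersolution inequality
    have hexp : Real.exp (-a * x) ≤ Real.exp (-m * x) := by
      apply Real.exp_le_exp.2; nlinarith
    have key1 : C₁ * Real.exp (-a * x) * (Real.sqrt K * (1 + x) * Real.exp (-m * x))
        < 2 * K * ((1 + x) * Real.exp (-2 * m * x)) := by
      rw [hE2]
      have hEpos : 0 < Real.exp (-m * x) := Real.exp_pos _
      have h1 : C₁ * Real.exp (-a * x) * Real.sqrt K ≤ C₁ * Real.sqrt K * Real.exp (-m * x) := by
        have := mul_le_mul_of_nonneg_left hexp hC₁.le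
        nlinarith [Real.sqrt_nonneg K]
      have h2 : C₁ * Real.sqrt K * Real.exp (-m * x) < 2 * K * Real.exp (-m * x) :=
        mul_lt_mul_of_pos_right hCK hEpos
      calc C₁ * Real.exp (-a * x) * (Real.sqrt K * (1 + x) * Real.exp (-m * x))
          = (C₁ * Real.exp (-a * x) * Real.sqrt K) * ((1 + x) * Real.exp (-m * x)) := by ring
        _ ≤ (C₁ * Real.sqrt K * Real.exp (-m * x)) * ((1 + x) * Real.exp (-m * x)) := by
            apply mul_le_mul_of_nonneg_right h1; positivity
        _ < (2 * K * Real.exp (-m * x)) * ((1 + x) * Real.exp (-m * x)) := by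
            apply mul_lt_mul_of_pos_right h2; positivity
        _ = 2 * K * ((1 + x) * (Real.exp (-m * x)) ^ 2) := by ring
    have key2 : -2 * B x ≤ -2 * m * B x := by
      nlinarith [hBpos]
    have hBx : B x = K * ((1 + x) ^ 2 * Real.exp (-2 * m * x)) := rfl
    have hB'x : B' x = K * (2 * (1 + x) * Real.exp (-2 * m * x)
        + (1 + x) ^ 2 * (-2 * m * Real.exp (-2 * m * x))) := rfl
    rw [hB'x]
    nlinarith [key1, key2, hBpos]
  calc f t ≤ B t := hmain
    _ = K * (1 + t) ^ 2 * Real.exp (-2 * m * t) := by rw [hB]; ring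
end

section
/- Let f : [0,∞) → ℝ be nonnegative differentiable with f'(t) ≤ -2 f(t) + C₄ e^{-at} for all t ≥ 0, where C₄ > 0 and a > 0. Then f(t) ≤ e^{-2t} f(0) + C₄ (1+t) e^{-min(2, a) t} for all t ≥ 0. -/
/-- If `f ≥ 0` is differentiable with `f' t ≤ -2 f t + C₄ e^{-a t}`, then
`f t ≤ e^{-2t} f 0 + C₄ (1+t) e^{-min(2,a) t}` for all `t ≥ 0`. -/
theorem decay_bound (f f' : ℝ → ℝ) (C₄ a : ℝ) (hC₄ : 0 < C₄) (ha : 0 < a)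
    (hf0 : ∀ t, 0 ≤ t → 0 ≤ f t)
    (hderiv : ∀ t, 0 ≤ t → HasDerivAt f (f' t) t)
    (hineq : ∀ t, 0 ≤ t → f' t ≤ -2 * f t + C₄ * Real.exp (-a * t)) :
    ∀ t, 0 ≤ t →
      f t ≤ Real.exp (-2 * t) * f 0 + C₄ * (1 + t) * Real.exp (-(min 2 a) * t) := by
  intro t ht
  set c : ℝ := 2 - min 2 a with hc
  have hc0 : 0 ≤ c := by
    simp [hc]
  -- the auxiliary function
  set h : ℝ → ℝ := fun s => C₄ * Real.exp (c * t) * s - Real.exp (2 * s) * f s with hh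
  -- derivative of h at points s ≥ 0
  have hderivh : ∀ s, 0 ≤ s → HasDerivAt h
      (C₄ * Real.exp (c * t) - (Real.exp (2 * s) * 2 * f s + Real.exp (2 * s) * f' s)) s := by
    intro s hs
    have h1 : HasDerivAt (fun s : ℝ => Real.exp (2 * s)) (Real.exp (2 * s) * 2) s := by
      have := ((hasDerivAt_id s).const_mul 2).exp
      simpa using this
    have h2 : HasDerivAt (fun s : ℝ => Real.exp (2 * s) * f s)
        (Real.exp (2 * s) * 2 * f s + Real.exp (2 * s) * f' s) s := h1.mul (hderiv s hs)
    have h3 : HasDerivAt (fun s : ℝ => C₄ * Real.exp (c * t) * s)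
        (C₄ * Real.exp (c * t)) s := by
      simpa using (hasDerivAt_id s).const_mul (C₄ * Real.exp (c * t))
    exact h3.sub h2
  -- monotonicity on [0, t]
  have hmono : MonotoneOn h (Set.Icc 0 t) := by
    apply monotoneOn_of_deriv_nonneg (convex_Icc 0 t)
    · exact fun s hs => ((hderivh s hs.1).continuousAt).continuousWithinAt
    · intro s hs
      rw [interior_Icc] at hs
      exact ((hderivh s hs.1.le).differentiableAt).differentiableWithinAt
    · intro s hs
      rw [interior_Icc] at hs
      rw [(hderivh s hs.1.le).deriv]
      have hkey : f' s ≤ -2 * f s + C₄ * Real.exp (-a * s) := hineq s hs.1.le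
      have hexp : Real.exp (2 * s) * (f' s + 2 * f s) ≤ C₄ * Real.exp ((2 - a) * s) := by
        have h4 : f' s + 2 * f s ≤ C₄ * Real.exp (-a * s) := by linarith
        calc Real.exp (2 * s) * (f' s + 2 * f s)
            ≤ Real.exp (2 * s) * (C₄ * Real.exp (-a * s)) := by
              exact mul_le_mul_of_nonneg_left h4 (Real.exp_pos _).le
          _ = C₄ * Real.exp ((2 - a) * s) := by
              rw [mul_comm (Real.exp (2*s)), mul_assoc, ← Real.exp_add]
              ring_nf
      have hce : (2 - a) * s ≤ c * t := by
        rcases le_total a 2 with h | h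
        · have : c = 2 - a := by simp [hc, min_eq_right h]
          rw [this]
          have : 0 ≤ 2 - a := by linarith
          nlinarith [hs.1.le, hs.2.le]
        · have hc' : c = 0 := by simp [hc, min_eq_left h]
          rw [hc']
          have : 2 - a ≤ 0 := by linarith
          nlinarith [hs.1.le]
      have := Real.exp_le_exp.mpr hce
      nlinarith [Real.exp_pos ((2-a)*s), Real.exp_pos (c*t)]
  -- apply monotonicity at 0 and t
  have hm := hmono (Set.left_mem_Icc.mpr ht) (Set.right_mem_Icc.mpr ht) ht
  simp only [hh] at hm
  -- hm : C₄ * exp (c*t) * 0 - exp 0 * f 0 ≤ C₄ * exp (c*t) * t - exp (2*t) * f t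
  have hm' : Real.exp (2 * t) * f t ≤ f 0 + C₄ * Real.exp (c * t) * t := by
    simp only [mul_zero, zero_mul] at hm
    norm_num at hm
    linarith
  have hbound : Real.exp (2 * t) * f t ≤ f 0 + C₄ * (1 + t) * Real.exp (c * t) := by
    nlinarith [Real.exp_pos (c * t)]
  have he2 : (0:ℝ) < Real.exp (2 * t) := Real.exp_pos _
  have := mul_le_mul_of_nonneg_left hbound (le_of_lt (inv_pos.mpr he2))
  rw [← Real.exp_neg] at this
  have key : f t ≤ Real.exp (-(2 * t)) * (f 0 + C₄ * (1 + t) * Real.exp (c * t)) := by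
    calc f t = Real.exp (-(2*t)) * (Real.exp (2*t) * f t) := by
          rw [← mul_assoc, ← Real.exp_add]; simp
      _ ≤ _ := by
          apply mul_le_mul_of_nonneg_left hbound (Real.exp_pos _).le
  calc f t ≤ Real.exp (-(2 * t)) * (f 0 + C₄ * (1 + t) * Real.exp (c * t)) := key
    _ = Real.exp (-2 * t) * f 0 + C₄ * (1 + t) * Real.exp (-(min 2 a) * t) := by
        rw [mul_add]
        congr 1
        · ring_nf
        · rw [mul_comm (Real.exp (-(2*t))), mul_assoc, ← Real.exp_add]
          congr 2
          simp [hc]; ring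
end

section
/- Let f : [0,∞) → ℝ be nonnegative differentiable and suppose that for all t, either f(t) ≤ (C²/8) e^{-2θt}, or f'(t) ≤ -2 f(t) + √2 C e^{-θt} f(t)^{1/2}, where C > 0 and θ > 0. Then there is a constant C' (depending on f(0), C, θ) such that f(t) ≤ C' (1+t)² e^{-2 min(1, θ) t} for all t ≥ 0. -/
set_option maxHeartbeats 1000000


/-- Dichotomy argument: if at each time either `f t ≤ (C²/8) e^{-2θt}` or the
Gronwall differential inequality
`f' t ≤ -2 f t + √2 C e^{-θt} (f t)^{1/2}` holds, then
`f t ≤ C' (1+t)² e^{-2 min(1,θ) t}` for some constant `C'`. -/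
theorem dichotomy_decay (f f' : ℝ → ℝ) (C θ : ℝ) (hC : 0 < C) (hθ : 0 < θ)
    (hf0 : ∀ t, 0 ≤ t → 0 ≤ f t)
    (hderiv : ∀ t, 0 ≤ t → HasDerivAt f (f' t) t)
    (hdich : ∀ t, 0 ≤ t →
      f t ≤ (C ^ 2 / 8) * Real.exp (-2 * θ * t) ∨
      f' t ≤ -2 * f t + Real.sqrt 2 * C * Real.exp (-θ * t) * (f t) ^ ((1 : ℝ) / 2)) :
    ∃ C' : ℝ, ∀ t, 0 ≤ t →
      f t ≤ C' * (1 + t) ^ 2 * Real.exp (-2 * min 1 θ * t) := by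
  set m : ℝ := min 1 θ with hm
  have hm0 : 0 < m := lt_min one_pos hθ
  have hm1 : m ≤ 1 := min_le_left _ _
  have hmθ : m ≤ θ := min_le_right _ _
  set K : ℝ := Real.sqrt (f 0) + C with hK
  have hKC : C ≤ K := le_add_of_nonneg_left (Real.sqrt_nonneg _)
  have hKpos : 0 < K := lt_of_lt_of_le hC hKC
  have hKsq : f 0 ≤ K ^ 2 := by
    rw [hK]
    nlinarith [Real.sqrt_nonneg (f 0), Real.sq_sqrt (hf0 0 le_rfl)]
  clear_value m K
  set g : ℝ → ℝ := fun x => K * ((1 + x) * Real.exp (-m * x)) with hg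
  set g' : ℝ → ℝ := fun x => K * (1 * Real.exp (-m * x)
      + (1 + x) * (Real.exp (-m * x) * -m)) with hg'
  have hgderiv : ∀ x : ℝ, HasDerivAt g (g' x) x := by
    intro x
    have h2 : HasDerivAt (fun x : ℝ => Real.exp (-m * x)) (Real.exp (-m * x) * -m) x := by
      simpa using ((hasDerivAt_id x).const_mul (-m)).exp
    have h1 : HasDerivAt (fun x : ℝ => (1 : ℝ) + x) 1 x := (hasDerivAt_id x).const_add 1
    exact (h1.mul h2).const_mul K
  set B : ℝ → ℝ := fun x => g x ^ 2 with hB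
  set B' : ℝ → ℝ := fun x => 2 * g x * g' x with hB'
  have hBderiv : ∀ x : ℝ, HasDerivAt B (B' x) x := by
    intro x
    have := (hgderiv x).fun_pow 2
    simpa [B', mul_comm, mul_assoc, mul_left_comm] using this
  have hgpos : ∀ x : ℝ, 0 ≤ x → 0 < g x := by
    intro x hx
    have : (0:ℝ) < 1 + x := by linarith
    positivity
  have hglb : ∀ x : ℝ, 0 ≤ x → K * Real.exp (-θ * x) ≤ g x := by
    intro x hx
    have he : Real.exp (-θ * x) ≤ Real.exp (-m * x) := by
      apply Real.exp_le_exp.2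
      nlinarith
    have h1 : Real.exp (-m * x) ≤ (1 + x) * Real.exp (-m * x) := by
      nlinarith [Real.exp_pos (-m * x)]
    calc K * Real.exp (-θ * x) ≤ K * Real.exp (-m * x) := by nlinarith
      _ ≤ K * ((1 + x) * Real.exp (-m * x)) := by nlinarith
  -- key: g' x + g x ≥ K * exp (-θ x)
  have hkey : ∀ x : ℝ, 0 ≤ x → K * Real.exp (-θ * x) ≤ g' x + g x := by
    intro x hx
    have he : Real.exp (-θ * x) ≤ Real.exp (-m * x) := by
      apply Real.exp_le_exp.2; nlinarith
    have hE := Real.exp_pos (-m * x)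
    have : g' x + g x = K * (Real.exp (-m * x) * (2 - m + (1 - m) * x)) := by
      simp only [g', g]; ring
    rw [this]
    have h2 : (1:ℝ) ≤ 2 - m + (1 - m) * x := by nlinarith
    calc K * Real.exp (-θ * x) ≤ K * Real.exp (-m * x) := by nlinarith
      _ ≤ K * (Real.exp (-m * x) * (2 - m + (1 - m) * x)) := by
          nlinarith [mul_nonneg (mul_pos hKpos hE).le (by linarith : (0:ℝ) ≤ 2 - m + (1 - m) * x - 1)]
  refine ⟨K ^ 2, fun t ht => ?_⟩
  have hmain : f t ≤ B t := by
    refine image_le_of_deriv_right_lt_deriv_boundary (f' := f') (B' := B')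
      (a := 0) (b := t) ?_ ?_ ?_ hBderiv ?_ (Set.mem_Icc.mpr ⟨ht, le_rfl⟩)
    · intro x hx
      exact ((hderiv x hx.1).continuousAt).continuousWithinAt
    · intro x hx
      exact (hderiv x hx.1).hasDerivWithinAt
    · -- f 0 ≤ B 0
      have : B 0 = K ^ 2 := by simp [B, g]
      rw [this]; exact hKsq
    · intro x hx hfB
      have hx0 : 0 ≤ x := hx.1
      have hgx := hgpos x hx0
      have hglbx := hglb x hx0
      have hEθ := Real.exp_pos (-θ * x)
      rcases hdich x hx0 with h | h
      · -- case 1 impossible: B x > (C^2/8) e^{-2θx}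
        exfalso
        have hBx : (C ^ 2 / 8) * Real.exp (-2 * θ * x) < B x := by
          have : Real.exp (-2 * θ * x) = Real.exp (-θ * x) * Real.exp (-θ * x) := by
            rw [← Real.exp_add]; ring_nf
          rw [this]
          have h1 : K * Real.exp (-θ * x) ≤ g x := hglbx
          have hKe : 0 < K * Real.exp (-θ * x) := by positivity
          have : (K * Real.exp (-θ * x)) ^ 2 ≤ g x ^ 2 := by nlinarith
          have hEE : 0 < Real.exp (-θ * x) * Real.exp (-θ * x) := mul_pos hEθ hEθ
          have hK2 : C ^ 2 ≤ K ^ 2 := by nlinarith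
          have hC2 : C ^ 2 / 8 * (Real.exp (-θ * x) * Real.exp (-θ * x))
              < (K * Real.exp (-θ * x)) ^ 2 := by
            nlinarith [mul_le_mul_of_nonneg_right hK2 hEE.le,
              mul_pos (mul_pos hC hC) hEE]
          calc C ^ 2 / 8 * (Real.exp (-θ * x) * Real.exp (-θ * x))
              < (K * Real.exp (-θ * x)) ^ 2 := hC2
            _ ≤ g x ^ 2 := this
            _ = B x := rfl
        rw [hfB] at h
        linarith
      · -- case 2: f' x ≤ -2 (g x)^2 + √2 C e^{-θx} g x < 2 g x g' x = B' x
        have hfx : f x = g x ^ 2 := hfB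
        have hrpow : (f x) ^ ((1:ℝ)/2) = g x := by
          rw [hfx, ← Real.sqrt_eq_rpow]
          exact Real.sqrt_sq hgx.le
        rw [hrpow, hfx] at h
        have hkeyx := hkey x hx0
        have hsqrt2 : Real.sqrt 2 < 2 := by
          nlinarith [Real.sq_sqrt (show (0:ℝ) ≤ 2 by norm_num), Real.sqrt_nonneg 2]
        have hCE : 0 < C * Real.exp (-θ * x) := mul_pos hC hEθ
        have hstep : Real.sqrt 2 * C * Real.exp (-θ * x) < 2 * (g' x + g x) := by
          have a1 : Real.sqrt 2 * (C * Real.exp (-θ * x)) < 2 * (C * Real.exp (-θ * x)) := by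
            nlinarith
          have a2 : 2 * (C * Real.exp (-θ * x)) ≤ 2 * (K * Real.exp (-θ * x)) := by
            nlinarith
          nlinarith
        show f' x < 2 * g x * g' x
        nlinarith [mul_lt_mul_of_pos_right hstep hgx]
  have hBt : B t = K ^ 2 * (1 + t) ^ 2 * Real.exp (-2 * m * t) := by
    have : Real.exp (-2 * m * t) = Real.exp (-m * t) * Real.exp (-m * t) := by
      rw [← Real.exp_add]; ring_nf
    simp only [B, g]; rw [this]; ring
  calc f t ≤ B t := hmain
    _ = K ^ 2 * (1 + t) ^ 2 * Real.exp (-2 * m * t) := hBt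
end
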